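/- Let G = ⟨N, E, l⟩ be a finite labeled directed graph, let G↓ = ⟨N↓, E↓, l↓⟩ be its quotient graph by bisimilarity, and let G' = ⟨N', E', l'⟩ be a finite labeled directed graph bisimilar to G with |N'| = |N↓|. Then G' is isomorphic to G↓: there is a bijection φ : N' → N↓ such that l↓(φ(n')) = l'(n') for every n' ∈ N', and (m', n') ∈ E' if and only if (φ(m'), φ(n')) ∈ E↓. Hence the smallest graph bisimilar to G is unique up to isomorphism. -/
import Mathlib


/-- A labeled directed graph: a directed edge relation and a node labeling. -/
structure LGraph (V : Type*) (L : Type*) where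
  edge : V → V → Prop
  label : V → L

/-- `R` is a bisimulation between `G₁` and `G₂`. -/
def IsBisim {V₁ V₂ L : Type*} (G₁ : LGraph V₁ L) (G₂ : LGraph V₂ L)
    (R : V₁ → V₂ → Prop) : Prop :=
  ∀ n₁ n₂, R n₁ n₂ →
    G₁.label n₁ = G₂.label n₂ ∧
    (∀ c₁, G₁.edge n₁ c₁ → ∃ c₂, G₂.edge n₂ c₂ ∧ R c₁ c₂) ∧
    (∀ c₂, G₂.edge n₂ c₂ → ∃ c₁, G₁.edge n₁ c₁ ∧ R c₁ c₂)

/-- Nodes are bisimilar iff some bisimulation relates them. -/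
def Bisimilar {V₁ V₂ L : Type*} (G₁ : LGraph V₁ L) (G₂ : LGraph V₂ L)
    (n₁ : V₁) (n₂ : V₂) : Prop :=
  ∃ R, IsBisim G₁ G₂ R ∧ R n₁ n₂


/-- The quotient graph `G↓` of `G` by bisimilarity: nodes are the bisimilarity
equivalence classes, the label of a class is the common label of its members,
and there is an edge from class `C` to class `D` iff some node in `C` has a
child in `D`. -/
def quotGraph {V L : Type*} (G : LGraph V L) : LGraph (Quot (Bisimilar G G)) L where
  edge := fun C D => ∃ m n, Quot.mk (Bisimilar G G) m = C ∧
    Quot.mk (Bisimilar G G) n = D ∧ G.edge m n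
  label := Quot.lift G.label (fun a b hab =>
    (hab.choose_spec.1 a b hab.choose_spec.2).1)

/-- The graphs `G₁` and `G₂` are bisimilar: every node of `G₁` is bisimilar to
some node of `G₂` and vice versa. -/
def GraphBisimilar {V₁ V₂ L : Type*} (G₁ : LGraph V₁ L) (G₂ : LGraph V₂ L) : Prop :=
  (∀ n₁, ∃ n₂, Bisimilar G₁ G₂ n₁ n₂) ∧ (∀ n₂, ∃ n₁, Bisimilar G₁ G₂ n₁ n₂)

section Aux
variable {V V₁ V₂ V₃ L : Type*}

theorem bisim_trans' {G₁ : LGraph V₁ L} {G₂ : LGraph V₂ L} {G₃ : LGraph V₃ L}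
    {a : V₁} {b : V₂} {c : V₃} (h₁ : Bisimilar G₁ G₂ a b) (h₂ : Bisimilar G₂ G₃ b c) :
    Bisimilar G₁ G₃ a c := by
  obtain ⟨R, hR, hab⟩ := h₁
  obtain ⟨S, hS, hbc⟩ := h₂
  refine ⟨fun x z => ∃ y, R x y ∧ S y z, ?_, b, hab, hbc⟩
  rintro x z ⟨y, hxy, hyz⟩
  obtain ⟨hl1, hf1, hb1⟩ := hR x y hxy
  obtain ⟨hl2, hf2, hb2⟩ := hS y z hyz
  refine ⟨hl1.trans hl2, ?_, ?_⟩
  · intro c₁ hc₁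
    obtain ⟨c₂, hc₂, hRc⟩ := hf1 c₁ hc₁
    obtain ⟨c₃, hc₃, hSc⟩ := hf2 c₂ hc₂
    exact ⟨c₃, hc₃, c₂, hRc, hSc⟩
  · intro c₃ hc₃
    obtain ⟨c₂, hc₂, hSc⟩ := hb2 c₃ hc₃
    obtain ⟨c₁, hc₁, hRc⟩ := hb1 c₂ hc₂
    exact ⟨c₁, hc₁, c₂, hRc, hSc⟩

theorem bisim_symm' {G₁ : LGraph V₁ L} {G₂ : LGraph V₂ L} {a : V₁} {b : V₂}
    (h : Bisimilar G₁ G₂ a b) : Bisimilar G₂ G₁ b a := by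
  obtain ⟨R, hR, hab⟩ := h
  refine ⟨fun y x => R x y, ?_, hab⟩
  intro y x hxy
  obtain ⟨hl, hf, hb⟩ := hR x y hxy
  exact ⟨hl.symm, hb, hf⟩

theorem bisim_refl' (G : LGraph V L) (n : V) : Bisimilar G G n n :=
  ⟨Eq, by rintro a b rfl; exact ⟨rfl, fun c hc => ⟨c, hc, rfl⟩, fun c hc => ⟨c, hc, rfl⟩⟩, rfl⟩

theorem eqvGen_bisim' {G : LGraph V L} {a b : V}
    (h : Relation.EqvGen (Bisimilar G G) a b) : Bisimilar G G a b := by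
  induction h with
  | rel _ _ h => exact h
  | refl x => exact bisim_refl' G x
  | symm _ _ _ ih => exact bisim_symm' ih
  | trans _ _ _ _ _ ih1 ih2 => exact bisim_trans' ih1 ih2

end Aux

/-- If `G'` is bisimilar to `G` and has exactly as many nodes as the quotient
graph `G↓` of `G`, then `G'` is isomorphic to `G↓`: there is a bijection
between their node sets preserving labels and preserving and reflecting edges.
Hence the smallest graph bisimilar to `G` is unique up to isomorphism. -/
theorem smallest_bisimilar_graph_unique {V V' L : Type*} [Fintype V] [Fintype V']
    (G : LGraph V L) (G' : LGraph V' L) (h : GraphBisimilar G G')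
    (hcard : Nat.card V' = Nat.card (Quot (Bisimilar G G))) :
    ∃ φ : V' → Quot (Bisimilar G G), Function.Bijective φ ∧
      (∀ n', (quotGraph G).label (φ n') = G'.label n') ∧
      (∀ m' n', G'.edge m' n' ↔ (quotGraph G).edge (φ m') (φ n')) := by

  classical
  choose f hf using h.2
  set φ : V' → Quot (Bisimilar G G) := fun n' => Quot.mk _ (f n') with hφ
  have key : ∀ (a : V) (n' : V'), Bisimilar G G' a n' → φ n' = Quot.mk _ a := by
    intro a n' ha
    exact Quot.sound (bisim_trans' (hf n') (bisim_symm' ha))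
  have hsurj : Function.Surjective φ := by
    intro q
    induction q using Quot.ind with
    | _ a =>
      obtain ⟨n', hn'⟩ := h.1 a
      exact ⟨n', key a n' hn'⟩
  have hbij : Function.Bijective φ :=
    (Nat.bijective_iff_surjective_and_card φ).mpr ⟨hsurj, hcard⟩
  refine ⟨φ, hbij, ?_, ?_⟩
  · intro n'
    obtain ⟨R, hR, hr⟩ := hf n'
    exact (hR _ _ hr).1
  · intro m' n'
    constructor
    · intro hedge
      obtain ⟨R, hR, hr⟩ := hf m'
      obtain ⟨c, hc, hRc⟩ := (hR _ _ hr).2.2 n' hedge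
      exact ⟨f m', c, rfl, (key c n' ⟨R, hR, hRc⟩).symm, hc⟩
    · rintro ⟨m, n, hm, hn, hedge⟩
      have hmm : Bisimilar G G m (f m') := eqvGen_bisim' (Quot.eqvGen_exact hm)
      have hmm' : Bisimilar G G' m m' := bisim_trans' hmm (hf m')
      obtain ⟨R, hR, hr⟩ := hmm'
      obtain ⟨c', hc', hRc⟩ := (hR _ _ hr).2.1 n hedge
      have : φ c' = φ n' := by
        rw [key n c' ⟨R, hR, hRc⟩, hn]
      rwa [hbij.1 this] at hc'
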